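/- (Grothendieck's identity) If (X, Y) is a centered two-dimensional Gaussian vector with E[X²] = E[Y²] = 1 and E[XY] = ρ ∈ [-1,1], then E[sign(X)·sign(Y)] = (2/π)·arcsin(ρ). -/

import Mathlib

open MeasureTheory ProbabilityTheory Real Set Filter
open scoped ENNReal NNReal

lemma measurable_realSign : Measurable Real.sign := by
  have h : Real.sign = fun r : ℝ => if r < 0 then (-1 : ℝ) else if 0 < r then 1 else 0 := rfl
  rw [h]
  exact Measurable.ite (measurableSet_lt measurable_id measurable_const) measurable_const
    (Measurable.ite (measurableSet_lt measurable_const measurable_id) measurable_const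
      measurable_const)

lemma abs_realSign_le (x : ℝ) : |Real.sign x| ≤ 1 := by
  rcases Real.sign_apply_eq x with h | h | h <;> rw [h] <;> norm_num

lemma realSign_mul_pos {r : ℝ} (hr : 0 < r) (x : ℝ) : Real.sign (r * x) = Real.sign x := by
  rcases lt_trichotomy x 0 with h | h | h
  · rw [Real.sign_of_neg h, Real.sign_of_neg (mul_neg_of_pos_of_neg hr h)]
  · simp [h]
  · rw [Real.sign_of_pos h, Real.sign_of_pos (mul_pos hr h)]

lemma integral_gaussianReal_eq (f : ℝ → ℝ) :
    ∫ x, f x ∂(gaussianReal 0 1) = ∫ x, gaussianPDFReal 0 1 x * f x := by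
  rw [gaussianReal_of_var_ne_zero _ one_ne_zero]
  rw [show gaussianPDF 0 1 = fun x => ((Real.toNNReal (gaussianPDFReal 0 1 x)) : ℝ≥0∞) from rfl]
  rw [integral_withDensity_eq_integral_smul (measurable_gaussianPDFReal 0 1).real_toNNReal f]
  congr 1
  ext x
  rw [NNReal.smul_def, smul_eq_mul, Real.coe_toNNReal _ (gaussianPDFReal_nonneg 0 1 x)]

lemma radial_integral : ∫ r in Set.Ioi (0 : ℝ), r * rexp (-r ^ 2 / 2) = 1 := by
  have hderiv : ∀ x ∈ Set.Ici (0 : ℝ),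
      HasDerivAt (fun r : ℝ => -rexp (-r ^ 2 / 2)) (x * rexp (-x ^ 2 / 2)) x := by
    intro x _
    have h1 : HasDerivAt (fun r : ℝ => -r ^ 2 / 2) (-x) x := by
      have := ((hasDerivAt_pow 2 x).neg).div_const 2
      refine this.congr_deriv ?_
      simp
      ring
    have h2 := h1.exp.neg
    refine h2.congr_deriv ?_
    ring
  have hint : IntegrableOn (fun r : ℝ => r * rexp (-r ^ 2 / 2)) (Set.Ioi 0) := by
    have h := integrable_mul_exp_neg_mul_sq (b := 1 / 2) (by norm_num)
    have heq : (fun x : ℝ => x * rexp (-(1 / 2) * x ^ 2)) = fun r : ℝ => r * rexp (-r ^ 2 / 2) := by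
      ext x; ring_nf
    rw [heq] at h
    exact h.integrableOn
  have htend : Tendsto (fun r : ℝ => -rexp (-r ^ 2 / 2)) atTop (nhds 0) := by
    rw [← neg_zero]
    apply Tendsto.neg
    apply Real.tendsto_exp_atBot.comp
    have h1 : Tendsto (fun r : ℝ => r ^ 2 / 2) atTop atTop :=
      (tendsto_pow_atTop (two_ne_zero)).atTop_div_const (by norm_num)
    have := tendsto_neg_atTop_atBot.comp h1
    refine this.congr fun x => ?_
    simp [neg_div]
  have h := integral_Ioi_of_hasDerivAt_of_tendsto' hderiv hint htend
  simpa using h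

lemma angular_integral {α : ℝ} (h0 : 0 ≤ α) (hπ : α ≤ π) :
    ∫ θ in Set.Ioo (-π) π, Real.sign (Real.cos θ) * Real.sign (Real.cos (θ - α)) =
      2 * π - 4 * α := by
  set f : ℝ → ℝ := fun θ => Real.sign (Real.cos θ) * Real.sign (Real.cos (θ - α)) with hf
  have hmeas : Measurable f :=
    (measurable_realSign.comp Real.measurable_cos).mul
      (measurable_realSign.comp (Real.measurable_cos.comp (measurable_id.sub_const α)))
  have hbound : ∀ θ, ‖f θ‖ ≤ 1 := by
    intro θ
    rw [Real.norm_eq_abs, hf, abs_mul]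
    have h1 := abs_realSign_le (Real.cos θ)
    have h2 := abs_realSign_le (Real.cos (θ - α))
    nlinarith [abs_nonneg (Real.sign (Real.cos θ)), abs_nonneg (Real.sign (Real.cos (θ - α)))]
  have hint : ∀ a b : ℝ, IntervalIntegrable f volume a b := by
    intro a b
    rw [intervalIntegrable_iff]
    have hc : IntegrableOn (fun _ : ℝ => (1 : ℝ)) (Set.uIoc a b) volume :=
      (integrableOn_const_iff).mpr (Or.inr measure_Ioc_lt_top)
    exact hc.mono' hmeas.aestronglyMeasurable (ae_of_all _ hbound)
  have hper : Function.Periodic f π := by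
    intro θ
    have h1 : θ + π - α = θ - α + π := by ring
    simp only [hf, h1, Real.cos_add_pi, Real.sign_neg]
    ring
  have hpi := Real.pi_pos
  -- central piece
  have hcentral : ∫ θ in (-(π / 2))..(π / 2), f θ = π - 2 * α := by
    have hc1 : -(π / 2) ≤ α - π / 2 := by linarith
    have hc2 : α - π / 2 ≤ π / 2 := by linarith
    rw [← intervalIntegral.integral_add_adjacent_intervals (hint (-(π / 2)) (α - π / 2))
      (hint (α - π / 2) (π / 2))]
    have hfirst : ∫ θ in (-(π / 2))..(α - π / 2), f θ = -α := by
      rw [intervalIntegral.integral_of_le hc1, MeasureTheory.integral_Ioc_eq_integral_Ioo]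
      rw [setIntegral_congr_fun (g := fun _ => (-1 : ℝ)) measurableSet_Ioo ?_]
      · rw [setIntegral_const, Real.volume_real_Ioo_of_le (by linarith),
          smul_eq_mul]
        ring_nf
      · intro θ hθ
        obtain ⟨hθ1, hθ2⟩ := hθ
        have hcosθ : 0 < Real.cos θ :=
          Real.cos_pos_of_mem_Ioo ⟨hθ1, by linarith⟩
        have hcosθα : Real.cos (θ - α) < 0 := by
          have hu1 : π / 2 < -(θ - α) := by linarith
          have hu2 : -(θ - α) < π + π / 2 := by linarith
          have := Real.cos_neg_of_pi_div_two_lt_of_lt hu1 hu2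
          rwa [Real.cos_neg] at this
        simp only [hf, Real.sign_of_pos hcosθ, Real.sign_of_neg hcosθα]
        norm_num
    have hsecond : ∫ θ in (α - π / 2)..(π / 2), f θ = π - α := by
      rw [intervalIntegral.integral_of_le hc2, MeasureTheory.integral_Ioc_eq_integral_Ioo]
      rw [setIntegral_congr_fun (g := fun _ => (1 : ℝ)) measurableSet_Ioo ?_]
      · rw [setIntegral_const, Real.volume_real_Ioo_of_le (by linarith),
          smul_eq_mul]
        ring_nf
      · intro θ hθ
        obtain ⟨hθ1, hθ2⟩ := hθ
        have hcosθ : 0 < Real.cos θ :=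
          Real.cos_pos_of_mem_Ioo ⟨by linarith, hθ2⟩
        have hcosθα : 0 < Real.cos (θ - α) :=
          Real.cos_pos_of_mem_Ioo ⟨by linarith, by linarith⟩
        simp only [hf, Real.sign_of_pos hcosθ, Real.sign_of_pos hcosθα]
        norm_num
    rw [hfirst, hsecond]
    ring
  have hIoo : ∫ θ in Set.Ioo (-π) π, f θ = ∫ θ in (-π)..π, f θ := by
    rw [intervalIntegral.integral_of_le (by linarith), MeasureTheory.integral_Ioc_eq_integral_Ioo]
  rw [hIoo]
  have hsplit : ∫ θ in (-π)..π, f θ = (∫ θ in (-π)..(0 : ℝ), f θ) + ∫ θ in (0 : ℝ)..π, f θ :=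
    (intervalIntegral.integral_add_adjacent_intervals (hint _ _) (hint _ _)).symm
  have hleft : ∫ θ in (-π)..(0 : ℝ), f θ = π - 2 * α := by
    have h1 : ∫ θ in (-π)..(-π + π), f θ = ∫ θ in (-(π / 2))..(-(π / 2) + π), f θ :=
      hper.intervalIntegral_add_eq (-π) (-(π / 2))
    have h2 : -π + π = (0 : ℝ) := by ring
    have h3 : -(π / 2) + π = π / 2 := by ring
    rw [h2, h3] at h1
    rw [h1, hcentral]
  have hright : ∫ θ in (0 : ℝ)..π, f θ = π - 2 * α := by
    have h1 : ∫ θ in (0 : ℝ)..(0 + π), f θ = ∫ θ in (-(π / 2))..(-(π / 2) + π), f θ :=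
      hper.intervalIntegral_add_eq 0 (-(π / 2))
    have h2 : (0 : ℝ) + π = π := by ring
    have h3 : -(π / 2) + π = π / 2 := by ring
    rw [h2, h3] at h1
    rw [h1, hcentral]
  rw [hsplit, hleft, hright]
  ring

/-- Grothendieck's identity: if `(X, Y)` is a centered two-dimensional
Gaussian vector with unit variances and correlation `ρ ∈ [-1,1]`, realized as
`X = γ₁`, `Y = ρ·γ₁ + √(1-ρ²)·γ₂` for independent standard Gaussians `γ₁, γ₂`,
then `E[sign(X)·sign(Y)] = (2/π)·arcsin(ρ)`. -/
theorem grothendieck_identity {Ω : Type*} [MeasurableSpace Ω]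
    (P : Measure Ω) [IsProbabilityMeasure P]
    (γ₁ γ₂ : Ω → ℝ) (hγ₁ : Measurable γ₁) (hγ₂ : Measurable γ₂)
    (h₁ : Measure.map γ₁ P = gaussianReal 0 1)
    (h₂ : Measure.map γ₂ P = gaussianReal 0 1)
    (hind : IndepFun γ₁ γ₂ P)
    (ρ : ℝ) (hρ : ρ ∈ Set.Icc (-1 : ℝ) 1) :
    ∫ ω, Real.sign (γ₁ ω) *
        Real.sign (ρ * γ₁ ω + Real.sqrt (1 - ρ ^ 2) * γ₂ ω) ∂P =
      2 / Real.pi * Real.arcsin ρ := by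
  have hpi := Real.pi_pos
  set s : ℝ := Real.sqrt (1 - ρ ^ 2) with hs
  set α : ℝ := Real.arccos ρ with hα
  have hcosα : Real.cos α = ρ := Real.cos_arccos hρ.1 hρ.2
  have hsinα : Real.sin α = s := Real.sin_arccos ρ
  have hα0 : 0 ≤ α := Real.arccos_nonneg ρ
  have hαπ : α ≤ π := Real.arccos_le_pi ρ
  set μ : Measure ℝ := gaussianReal 0 1 with hμ
  set G : ℝ × ℝ → ℝ := fun p => Real.sign p.1 * Real.sign (ρ * p.1 + s * p.2) with hG
  have hGmeas : Measurable G :=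
    (measurable_realSign.comp measurable_fst).mul
      (measurable_realSign.comp ((measurable_fst.const_mul ρ).add (measurable_snd.const_mul s)))
  have hGbound : ∀ p, ‖G p‖ ≤ 1 := by
    intro p
    rw [Real.norm_eq_abs, hG, abs_mul]
    have h1 := abs_realSign_le p.1
    have h2 := abs_realSign_le (ρ * p.1 + s * p.2)
    nlinarith [abs_nonneg (Real.sign p.1), abs_nonneg (Real.sign (ρ * p.1 + s * p.2))]
  have hpair : Measurable fun ω => (γ₁ ω, γ₂ ω) := hγ₁.prodMk hγ₂
  have hmap : Measure.map (fun ω => (γ₁ ω, γ₂ ω)) P = μ.prod μ := by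
    rw [(indepFun_iff_map_prod_eq_prod_map_map hγ₁.aemeasurable hγ₂.aemeasurable).mp hind,
      h₁, h₂]
  have step1 : ∫ ω, Real.sign (γ₁ ω) * Real.sign (ρ * γ₁ ω + s * γ₂ ω) ∂P
      = ∫ p, G p ∂(μ.prod μ) := by
    rw [← hmap, integral_map hpair.aemeasurable hGmeas.aestronglyMeasurable]
  rw [step1]
  -- from product of gaussians to a density over ℝ²
  have hGint : Integrable G (μ.prod μ) :=
    (integrable_const 1).mono' hGmeas.aestronglyMeasurable (ae_of_all _ hGbound)
  set W : ℝ × ℝ → ℝ := fun p => gaussianPDFReal 0 1 p.1 * (gaussianPDFReal 0 1 p.2 * G p)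
    with hW
  have hWmeas : Measurable W :=
    ((measurable_gaussianPDFReal 0 1).comp measurable_fst).mul
      (((measurable_gaussianPDFReal 0 1).comp measurable_snd).mul hGmeas)
  have hWint : Integrable W (volume.prod volume) := by
    refine ((integrable_gaussianPDFReal 0 1).mul_prod
      (integrable_gaussianPDFReal 0 1)).mono' hWmeas.aestronglyMeasurable (ae_of_all _ ?_)
    intro p
    rw [Real.norm_eq_abs, hW]
    have h1 := gaussianPDFReal_nonneg 0 1 p.1
    have h2 := gaussianPDFReal_nonneg 0 1 p.2
    have h3 := hGbound p
    rw [Real.norm_eq_abs] at h3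
    rw [abs_mul, abs_mul, abs_of_nonneg h1, abs_of_nonneg h2]
    exact mul_le_mul_of_nonneg_left (mul_le_of_le_one_right h2 h3) h1
  have step2 : ∫ p, G p ∂(μ.prod μ) = ∫ p, W p := by
    rw [MeasureTheory.integral_prod _ hGint]
    rw [hμ, integral_gaussianReal_eq]
    have hinner : ∀ x : ℝ, gaussianPDFReal 0 1 x * ∫ y, G (x, y) ∂(gaussianReal 0 1)
        = ∫ y, W (x, y) := by
      intro x
      rw [integral_gaussianReal_eq, ← MeasureTheory.integral_const_mul]
    simp_rw [hinner]
    have h := MeasureTheory.integral_integral (f := fun x y => W (x, y)) hWint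
    simp only [Prod.mk.eta] at h
    rw [h, ← Measure.volume_eq_prod]
  rw [step2]
  -- polar coordinates
  have step3 : ∫ p, W p = (∫ r in Set.Ioi (0 : ℝ), r * rexp (-r ^ 2 / 2)) *
      ∫ θ in Set.Ioo (-π) π,
        (2 * π)⁻¹ * (Real.sign (Real.cos θ) * Real.sign (Real.cos (θ - α))) := by
    rw [← integral_comp_polarCoord_symm W]
    have htarget : polarCoord.target = Set.Ioi (0 : ℝ) ×ˢ Set.Ioo (-π) π := rfl
    rw [htarget]
    have hEq : Set.EqOn (fun p : ℝ × ℝ => p.1 • W (polarCoord.symm p))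
        (fun p : ℝ × ℝ => (p.1 * rexp (-p.1 ^ 2 / 2)) *
          ((2 * π)⁻¹ * (Real.sign (Real.cos p.2) * Real.sign (Real.cos (p.2 - α)))))
        (Set.Ioi (0 : ℝ) ×ˢ Set.Ioo (-π) π) := by
      rintro ⟨r, θ⟩ ⟨hr, hθ⟩
      simp only [Set.mem_Ioi] at hr
      have hsymm : polarCoord.symm (r, θ) = (r * Real.cos θ, r * Real.sin θ) := rfl
      simp only [hsymm, hW, hG, smul_eq_mul]
      have hsign1 : Real.sign (r * Real.cos θ) = Real.sign (Real.cos θ) :=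
        realSign_mul_pos hr _
      have harg : ρ * (r * Real.cos θ) + s * (r * Real.sin θ) = r * Real.cos (θ - α) := by
        rw [Real.cos_sub, hcosα, hsinα]; ring
      have hsign2 : Real.sign (ρ * (r * Real.cos θ) + s * (r * Real.sin θ))
          = Real.sign (Real.cos (θ - α)) := by
        rw [harg, realSign_mul_pos hr]
      rw [hsign1, hsign2]
      have hpdf : gaussianPDFReal 0 1 (r * Real.cos θ) * gaussianPDFReal 0 1 (r * Real.sin θ)
          = (2 * π)⁻¹ * rexp (-r ^ 2 / 2) := by
        simp only [gaussianPDFReal, NNReal.coe_one, mul_one, sub_zero]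
        rw [mul_mul_mul_comm, ← Real.exp_add, ← mul_inv,
          Real.mul_self_sqrt (by positivity)]
        congr 1
        have : (r * Real.cos θ) ^ 2 + (r * Real.sin θ) ^ 2 = r ^ 2 := by
          have := Real.sin_sq_add_cos_sq θ
          nlinarith
        field_simp
        congr 1
        nlinarith [this]
      linear_combination
        (r * (Real.sign (Real.cos θ) * Real.sign (Real.cos (θ - α)))) * hpdf
    rw [setIntegral_congr_fun (measurableSet_Ioi.prod measurableSet_Ioo) hEq]
    rw [Measure.volume_eq_prod, ← Measure.prod_restrict]
    exact MeasureTheory.integral_prod_mul (μ := volume.restrict (Set.Ioi 0))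
      (ν := volume.restrict (Set.Ioo (-π) π)) (fun r => r * rexp (-r ^ 2 / 2))
      (fun θ => (2 * π)⁻¹ * (Real.sign (Real.cos θ) * Real.sign (Real.cos (θ - α))))
  rw [step3, radial_integral, one_mul, MeasureTheory.integral_const_mul,
    angular_integral hα0 hαπ]
  rw [Real.arcsin_eq_pi_div_two_sub_arccos, ← hα]
  field_simp
  ring
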